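/- Let f : ℝ^d → ℝ^d be Lipschitz and satisfy the dissipativity condition ⟨f(x), x⟩ ≤ C(1 − ‖x‖²) for all x. Then for solutions of the ODE ż = f(z), z(0) = x₀: (a) there exists γ > 0 and C' such that ‖z(t)‖^p ≤ e^{−γ t} ‖x₀‖^p + C' for all t ≥ 0 and p ≥ 1; (b) there exists C'' such that ‖z(s) − z(r)‖ ≤ C'' |s − r| (1 + ‖x₀‖) for all s, r ∈ [0,1]. -/
import Mathlib


open Set
open scoped RealInnerProductSpace

lemma my_rpow_subadd {x y q : ℝ} (hx : 0 ≤ x) (hy : 0 ≤ y) (hq0 : 0 ≤ q) (hq1 : q ≤ 1) :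
    (x + y) ^ q ≤ x ^ q + y ^ q := by
  lift x to NNReal using hx
  lift y to NNReal using hy
  exact_mod_cast NNReal.rpow_add_le_add_rpow x y hq0 hq1

lemma my_gron {d : ℕ}
    (f : EuclideanSpace ℝ (Fin d) → EuclideanSpace ℝ (Fin d))
    (C : ℝ) (hC : 0 < C)
    (hdiss : ∀ x : EuclideanSpace ℝ (Fin d), ⟪f x, x⟫ ≤ C * (1 - ‖x‖ ^ 2))
    (q : ℝ) (hq : 1 ≤ q)
    (z : ℝ → EuclideanSpace ℝ (Fin d)) (hz : ∀ t : ℝ, HasDerivAt z (f (z t)) t) :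
    ∀ t : ℝ, 0 ≤ t →
      (‖z t‖ ^ 2 : ℝ) ^ q ≤ Real.exp (-(C * q) * t) * (‖z 0‖ ^ 2 : ℝ) ^ q + 2 ^ q := by
  have hq0 : (0:ℝ) < q := lt_of_lt_of_le one_pos hq
  set g : ℝ → ℝ := fun t => ‖z t‖ ^ 2 with hgdef
  have hgnn : ∀ t, 0 ≤ g t := fun t => sq_nonneg _
  have hg : ∀ t, HasDerivAt g (2 * ⟪f (z t), z t⟫) t := by
    intro t
    have h1 : HasDerivAt (fun t => (⟪z t, z t⟫ : ℝ))
        (⟪z t, f (z t)⟫ + ⟪f (z t), z t⟫) t := (hz t).inner ℝ (hz t)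
    have h2 : (⟪z t, f (z t)⟫ + ⟪f (z t), z t⟫ : ℝ) = 2 * ⟪f (z t), z t⟫ := by
      rw [real_inner_comm]; ring
    rw [h2] at h1
    convert h1 using 2 with s
    exact (real_inner_self_eq_norm_sq (z s)).symm
  set G : ℝ → ℝ := fun t => (g t) ^ q with hGdef
  have hG : ∀ t, HasDerivAt G ((q * (g t) ^ (q - 1)) * (2 * ⟪f (z t), z t⟫)) t := by
    intro t
    exact (Real.hasDerivAt_rpow_const (Or.inr hq)).comp t (hg t)
  set h : ℝ → ℝ := fun t => Real.exp (C * q * t) * (G t - 2 ^ q) with hhdef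
  have hh : ∀ t, HasDerivAt h
      (Real.exp (C * q * t) * (C * q) * (G t - 2 ^ q)
        + Real.exp (C * q * t) * ((q * (g t) ^ (q - 1)) * (2 * ⟪f (z t), z t⟫))) t := by
    intro t
    have h1 : HasDerivAt (fun t : ℝ => C * q * t) (C * q) t := by
      simpa using (hasDerivAt_id t).const_mul (C * q)
    exact h1.exp.mul ((hG t).sub_const (2 ^ q))
  have key : ∀ t : ℝ, Real.exp (C * q * t) * (C * q) * (G t - 2 ^ q)
        + Real.exp (C * q * t) * ((q * (g t) ^ (q - 1)) * (2 * ⟪f (z t), z t⟫)) ≤ 0 := by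
    intro t
    set a := g t with ha
    have han : 0 ≤ a := hgnn t
    have hE : 0 < Real.exp (C * q * t) := Real.exp_pos _
    have hI : (⟪f (z t), z t⟫ : ℝ) ≤ C * (1 - a) := hdiss (z t)
    have hpow_nn : (0:ℝ) ≤ a ^ (q - 1) := Real.rpow_nonneg han _
    have hmul : a ^ (q - 1) * a = a ^ q := by
      rcases eq_or_lt_of_le han with h0 | h0
      · rw [← h0, Real.zero_rpow (ne_of_gt hq0), mul_zero]
      · rw [← Real.rpow_add_one (ne_of_gt h0), sub_add_cancel]
    have hqann : (0:ℝ) ≤ 2 ^ q := Real.rpow_nonneg (by norm_num) q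
    have haq_nn : (0:ℝ) ≤ a ^ q := Real.rpow_nonneg han q
    have hkey2 : 2 * a ^ (q - 1) ≤ 2 ^ q + a ^ q := by
      rcases le_total a 2 with h2 | h2
      · have hle : a ^ (q - 1) ≤ (2:ℝ) ^ (q - 1) :=
          Real.rpow_le_rpow han h2 (by linarith)
        have h2q : (2:ℝ) ^ (q - 1) * 2 = 2 ^ q := by
          rw [← Real.rpow_add_one (by norm_num : (2:ℝ) ≠ 0), sub_add_cancel]
        nlinarith
      · have h1 : 2 * a ^ (q - 1) ≤ a * a ^ (q - 1) :=
          mul_le_mul_of_nonneg_right h2 hpow_nn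
        have h2' : a * a ^ (q - 1) = a ^ q := by rw [mul_comm, hmul]
        linarith
    have hstep : q * a ^ (q - 1) * (2 * ⟪f (z t), z t⟫)
        ≤ q * (2 * C) * (a ^ (q - 1) - a ^ q) := by
      have h1 : (2:ℝ) * ⟪f (z t), z t⟫ ≤ 2 * (C * (1 - a)) := by linarith
      have h2 : q * a ^ (q - 1) * (2 * ⟪f (z t), z t⟫)
          ≤ q * a ^ (q - 1) * (2 * (C * (1 - a))) :=
        mul_le_mul_of_nonneg_left h1 (by positivity)
      have h3 : q * a ^ (q - 1) * (2 * (C * (1 - a)))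
          = q * (2 * C) * (a ^ (q - 1) - a ^ (q - 1) * a) := by ring
      rw [hmul] at h3
      linarith
    have hGt : G t = a ^ q := rfl
    have hsum : C * q * (G t - 2 ^ q) + q * a ^ (q - 1) * (2 * ⟪f (z t), z t⟫) ≤ 0 := by
      rw [hGt]
      nlinarith [mul_le_mul_of_nonneg_left hkey2 (le_of_lt (mul_pos hC hq0))]
    calc Real.exp (C * q * t) * (C * q) * (G t - 2 ^ q)
          + Real.exp (C * q * t) * ((q * a ^ (q - 1)) * (2 * ⟪f (z t), z t⟫))
        = Real.exp (C * q * t)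
            * (C * q * (G t - 2 ^ q) + q * a ^ (q - 1) * (2 * ⟪f (z t), z t⟫)) := by ring
      _ ≤ 0 := mul_nonpos_of_nonneg_of_nonpos hE.le hsum
  have hanti : Antitone h := by
    apply antitone_of_deriv_nonpos
    · exact fun t => (hh t).differentiableAt
    · intro t
      rw [(hh t).deriv]
      exact key t
  intro t ht
  have hht : h t ≤ h 0 := hanti ht
  have hh0 : h 0 = G 0 - 2 ^ q := by simp [hhdef]
  have hE : (0:ℝ) < Real.exp (C * q * t) := Real.exp_pos _
  have hEinv : (0:ℝ) < Real.exp (-(C * q) * t) := Real.exp_pos _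
  have hmulE : Real.exp (-(C * q) * t) * Real.exp (C * q * t) = 1 := by
    rw [← Real.exp_add]; ring_nf; exact Real.exp_zero
  have hqann : (0:ℝ) ≤ 2 ^ q := Real.rpow_nonneg (by norm_num) q
  rw [hh0] at hht
  have h1 : Real.exp (-(C * q) * t) * (Real.exp (C * q * t) * (G t - 2 ^ q))
      ≤ Real.exp (-(C * q) * t) * (G 0 - 2 ^ q) :=
    mul_le_mul_of_nonneg_left hht hEinv.le
  have h2 : Real.exp (-(C * q) * t) * (Real.exp (C * q * t) * (G t - 2 ^ q))
      = G t - 2 ^ q := by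
    rw [← mul_assoc, hmulE, one_mul]
  rw [h2] at h1
  have hEinv1 : Real.exp (-(C * q) * t) ≤ 1 := by
    rw [Real.exp_le_one_iff]
    nlinarith [mul_nonneg (mul_pos hC hq0).le ht]
  show G t ≤ Real.exp (-(C * q) * t) * G 0 + 2 ^ q
  nlinarith [mul_nonneg hEinv.le hqann]

/-- Let `f : ℝ^d → ℝ^d` be Lipschitz and dissipative: `⟪f x, x⟫ ≤ C (1 - ‖x‖²)`.  Then for
solutions of `ż = f z`, `z 0 = x₀`:
(a) for every `p ≥ 1` there are `γ > 0` and `C'` with `‖z t‖^p ≤ exp (-γ t) ‖x₀‖^p + C'` for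
all `t ≥ 0`;
(b) there is `C''` with `‖z s - z r‖ ≤ C'' |s - r| (1 + ‖x₀‖)` for all `s, r ∈ [0,1]`. -/
theorem dissipative_ode_bounds {d : ℕ}
    (f : EuclideanSpace ℝ (Fin d) → EuclideanSpace ℝ (Fin d))
    (K : NNReal) (hf : LipschitzWith K f)
    (C : ℝ) (hC : 0 < C)
    (hdiss : ∀ x : EuclideanSpace ℝ (Fin d), ⟪f x, x⟫ ≤ C * (1 - ‖x‖ ^ 2)) :
    (∀ p : ℝ, 1 ≤ p → ∃ γ : ℝ, 0 < γ ∧ ∃ C' : ℝ,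
      ∀ (x₀ : EuclideanSpace ℝ (Fin d)) (z : ℝ → EuclideanSpace ℝ (Fin d)),
        z 0 = x₀ → (∀ t : ℝ, HasDerivAt z (f (z t)) t) →
        ∀ t : ℝ, 0 ≤ t → ‖z t‖ ^ p ≤ Real.exp (-γ * t) * ‖x₀‖ ^ p + C') ∧
    (∃ C'' : ℝ,
      ∀ (x₀ : EuclideanSpace ℝ (Fin d)) (z : ℝ → EuclideanSpace ℝ (Fin d)),
        z 0 = x₀ → (∀ t : ℝ, HasDerivAt z (f (z t)) t) →
        ∀ s ∈ Icc (0:ℝ) 1, ∀ r ∈ Icc (0:ℝ) 1,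
          ‖z s - z r‖ ≤ C'' * |s - r| * (1 + ‖x₀‖)) := by
  constructor
  · -- part (a)
    intro p hp
    refine ⟨C * (p / 2), by positivity, 2 ^ (p / 2), ?_⟩
    intro x₀ z hz0 hz t ht
    have hxp : ∀ (v : EuclideanSpace ℝ (Fin d)), ((‖v‖ ^ 2 : ℝ)) ^ (p / 2) = ‖v‖ ^ p := by
      intro v
      rw [← Real.rpow_natCast ‖v‖ 2, ← Real.rpow_mul (norm_nonneg v)]
      congr 1
      push_cast
      ring
    rcases le_total 2 p with h2p | h2p
    · -- p ≥ 2
      have := my_gron f C hC hdiss (p / 2) (by linarith) z hz t ht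
      rw [hz0, hxp, hxp] at this
      have hγ : -(C * (p / 2)) * t = -(C * (p / 2)) * t := rfl
      calc ‖z t‖ ^ p ≤ Real.exp (-(C * (p / 2)) * t) * ‖x₀‖ ^ p + 2 ^ (p / 2) := this
        _ = Real.exp (-(C * (p / 2)) * t) * ‖x₀‖ ^ p + 2 ^ (p / 2) := rfl
    · -- 1 ≤ p ≤ 2
      have h1 := my_gron f C hC hdiss 1 le_rfl z hz t ht
      rw [hz0] at h1
      simp only [Real.rpow_one] at h1
      have hp2nn : (0:ℝ) ≤ p / 2 := by linarith
      have hbase : (0:ℝ) ≤ ‖z t‖ ^ 2 := sq_nonneg _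
      have step1 : (‖z t‖ ^ 2 : ℝ) ^ (p / 2)
          ≤ (Real.exp (-(C * 1) * t) * ‖x₀‖ ^ 2 + 2) ^ (p / 2) :=
        Real.rpow_le_rpow hbase h1 hp2nn
      have step2 : (Real.exp (-(C * 1) * t) * ‖x₀‖ ^ 2 + 2) ^ (p / 2)
          ≤ (Real.exp (-(C * 1) * t) * ‖x₀‖ ^ 2) ^ (p / 2) + 2 ^ (p / 2) :=
        my_rpow_subadd (by positivity) (by norm_num) hp2nn (by linarith)
      have step3 : (Real.exp (-(C * 1) * t) * ‖x₀‖ ^ 2) ^ (p / 2)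
          = Real.exp (-(C * (p / 2)) * t) * (‖x₀‖ ^ 2 : ℝ) ^ (p / 2) := by
        rw [Real.mul_rpow (Real.exp_pos _).le (sq_nonneg _), ← Real.exp_mul]
        congr 2
        ring
      rw [hxp] at step1
      rw [step3, hxp] at step2
      linarith
  · -- part (b)
    refine ⟨‖f 0‖ + 3 * K, ?_⟩
    intro x₀ z hz0 hz s hs r hr
    have hKnn : (0:ℝ) ≤ (K : ℝ) := K.coe_nonneg
    have hbd : ∀ t ∈ Icc (0:ℝ) 1, ‖z t‖ ≤ ‖x₀‖ + 2 := by
      intro t htI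
      have h1 := my_gron f C hC hdiss 1 le_rfl z hz t htI.1
      rw [hz0] at h1
      simp only [Real.rpow_one] at h1
      have hE1 : Real.exp (-(C * 1) * t) ≤ 1 := by
        rw [Real.exp_le_one_iff]
        nlinarith [mul_nonneg hC.le htI.1]
      have hx2 : (0:ℝ) ≤ ‖x₀‖ ^ 2 := sq_nonneg _
      have h2 : ‖z t‖ ^ 2 ≤ ‖x₀‖ ^ 2 + 2 := by
        nlinarith [Real.exp_pos (-(C * 1) * t)]
      nlinarith [norm_nonneg (z t), norm_nonneg x₀]
    have hdbd : ∀ t ∈ Icc (0:ℝ) 1, ‖f (z t)‖ ≤ (‖f 0‖ + 3 * K) * (1 + ‖x₀‖) := by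
      intro t htI
      have h1 : ‖f (z t) - f 0‖ ≤ K * ‖z t - 0‖ := by
        have := hf.dist_le_mul (z t) 0
        rwa [dist_eq_norm, dist_eq_norm] at this
      rw [sub_zero] at h1
      have h2 : ‖f (z t)‖ ≤ ‖f (z t) - f 0‖ + ‖f 0‖ := by
        simpa using norm_add_le (f (z t) - f 0) (f 0)
      have h3 := hbd t htI
      have h4 : (K:ℝ) * ‖z t‖ ≤ K * (‖x₀‖ + 2) := by
        exact mul_le_mul_of_nonneg_left h3 hKnn
      nlinarith [norm_nonneg (f 0), norm_nonneg x₀]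
    have hmv := Convex.norm_image_sub_le_of_norm_hasDerivWithin_le
      (f := z) (f' := fun t => f (z t)) (s := Icc (0:ℝ) 1)
      (fun t _ => (hz t).hasDerivWithinAt) hdbd (convex_Icc 0 1) hr hs
    rw [Real.norm_eq_abs] at hmv
    calc ‖z s - z r‖ ≤ (‖f 0‖ + 3 * K) * (1 + ‖x₀‖) * |s - r| := hmv
      _ = (‖f 0‖ + 3 * K) * |s - r| * (1 + ‖x₀‖) := by ring
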